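/- Every rational number p/q in reduced form with p odd and q even can be written as a continued fraction r = n_k - 1/(n_{k-1} - 1/(... - 1/n_1)) where k is even and all entries n_1,...,n_k are even integers. -/

import Mathlib

/-- Evaluation of the continued fraction `n_k - 1/(n_{k-1} - 1/(⋯ - 1/n_1))`,
where the list is `[n_k, n_{k-1}, …, n_1]` (outermost entry first). -/
def cfEval : List ℤ → ℚ
  | [] => 0
  | n :: l => (n : ℚ) - (cfEval l)⁻¹

lemma exists_even_n (p q : ℤ) (hq : q ≠ 0) (hpar : ¬(Even p ↔ Even q)) :
    ∃ n : ℤ, Even n ∧ (n * q - p).natAbs < q.natAbs := by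
  set D : ℤ := (q.natAbs : ℤ) with hD
  have hD0 : 0 < D := by
    have := Int.natAbs_pos.mpr hq
    omega
  set k : ℤ := (p + D) / (2 * D) with hk
  set r : ℤ := (p + D) % (2 * D) with hr
  have hdiv : 2 * D * k + r = p + D := Int.mul_ediv_add_emod (p + D) (2 * D)
  have hr0 : 0 ≤ r := Int.emod_nonneg _ (by omega)
  have hr2 : r < 2 * D := Int.emod_lt_of_pos _ (by omega)
  have hsign : ∃ n : ℤ, Even n ∧ n * q = 2 * D * k := by
    rcases lt_or_gt_of_ne hq with h | h
    · refine ⟨-(2 * k), ⟨-k, by ring⟩, ?_⟩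
      have hDq : D = -q := by omega
      rw [hDq]; ring
    · refine ⟨2 * k, ⟨k, by ring⟩, ?_⟩
      have hDq : D = q := by omega
      rw [hDq]; ring
  obtain ⟨n, hne, hnq⟩ := hsign
  refine ⟨n, hne, ?_⟩
  have hval : n * q - p = D - r := by omega
  -- parity: n*q - p has parity of p, which differs from that of q (= parity of D)
  have hnq2 : (n * q) % 2 = 0 := Int.even_iff.mp (hne.mul_right q)
  have hp2 : p % 2 ≠ q % 2 := by
    rw [Int.even_iff, Int.even_iff] at hpar
    omega
  omega

lemma cf_key : ∀ N : ℕ, ∀ p q : ℤ, q.natAbs ≤ N → q ≠ 0 → Int.gcd p q = 1 →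
    ¬(Even p ↔ Even q) →
    ∃ l : List ℤ, (Even l.length ↔ Even q) ∧ (∀ m ∈ l, Even m) ∧
      cfEval l = (p : ℚ) / (q : ℚ) := by
  intro N
  induction N with
  | zero =>
    intro p q hle hq _ _
    exfalso
    have := Int.natAbs_pos.mpr hq
    omega
  | succ N ih =>
    intro p q hle hq hgcd hpar
    by_cases h1 : q.natAbs = 1
    · -- base case q = ±1
      have hq1 : q = 1 ∨ q = -1 := by omega
      have hqodd : ¬ Even q := by rcases hq1 with h | h <;> subst h <;> decide
      have hpe : Even p := by tauto
      refine ⟨[p * q], ?_, ?_, ?_⟩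
      · simp [hqodd]
      · intro m hm
        simp at hm
        subst hm
        exact hpe.mul_right q
      · rcases hq1 with h | h <;> subst h <;>
          simp [cfEval] <;> push_cast <;> ring
    · obtain ⟨n, hne, hlt⟩ := exists_even_n p q hq hpar
      have hq'0 : n * q - p ≠ 0 := by
        intro h0
        have hdvd : q ∣ p := ⟨n, by rw [mul_comm]; omega⟩
        have : Int.gcd p q = q.natAbs := Int.gcd_eq_natAbs_right hdvd
        omega
      have hgcd' : Int.gcd q (n * q - p) = 1 := by
        rw [← Int.isCoprime_iff_gcd_eq_one]
        have hc : IsCoprime (q : ℤ) p :=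
          (Int.isCoprime_iff_gcd_eq_one.mpr hgcd).symm
        have hc2 : IsCoprime (q : ℤ) (-p) := hc.neg_right
        have hc3 : IsCoprime (q : ℤ) (-p + q * n) := hc2.add_mul_left_right n
        have : n * q - p = -p + q * n := by ring
        rwa [this]
      have hpar' : ¬(Even q ↔ Even (n * q - p)) := by
        have hnq2 : (n * q) % 2 = 0 := Int.even_iff.mp (hne.mul_right q)
        simp only [Int.even_iff] at hpar ⊢
        omega
      obtain ⟨l, hlen, hev, hval⟩ := ih q (n * q - p) (by omega) hq'0 hgcd' hpar'
      refine ⟨n :: l, ?_, ?_, ?_⟩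
      · simp only [List.length_cons, Nat.even_add_one]
        tauto
      · intro m hm
        rcases List.mem_cons.mp hm with h | h
        · subst h; exact hne
        · exact hev m h
      · show (n : ℚ) - (cfEval l)⁻¹ = (p : ℚ) / q
        rw [hval, inv_div]
        have hqQ : (q : ℚ) ≠ 0 := Int.cast_ne_zero.mpr hq
        push_cast
        field_simp
        ring

theorem stmt0 (p q : ℤ) (hq : q ≠ 0) (hred : Int.gcd p q = 1)
    (hp : Odd p) (hqe : Even q) :
    ∃ l : List ℤ, Even l.length ∧ (∀ n ∈ l, Even n) ∧
      cfEval l = (p : ℚ) / (q : ℚ) := by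
  have hpar : ¬(Even p ↔ Even q) := by
    rw [Int.not_even_iff_odd.symm] at hp
    tauto
  obtain ⟨l, hlen, hev, hval⟩ := cf_key q.natAbs p q le_rfl hq hred hpar
  exact ⟨l, hlen.mpr hqe, hev, hval⟩
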